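/- Let E be a real Hilbert space and let h : E → ℝ be differentiable and η-approximately β-gradient Lipschitz, i.e. ‖∇h(θ1) − ∇h(θ2)‖ ≤ β‖θ1 − θ2‖ + η for all θ1, θ2, with β > 0, η > 0. If θ* is a global minimizer of h, then for every θ, h(θ*) − h(θ) ≤ −(1/(2β))·(max(‖∇h(θ)‖ − η, 0))². -/

import Mathlib

open RealInnerProductSpace

lemma approx_descent
    {E : Type*} [NormedAddCommGroup E] [InnerProductSpace ℝ E] [CompleteSpace E]
    (h : E → ℝ) (g : E → E) (β η : ℝ) (hβ : 0 < β) (hη : 0 < η)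
    (hgrad : ∀ θ : E, HasGradientAt h (g θ) θ)
    (happrox : ∀ θ1 θ2 : E, ‖g θ1 - g θ2‖ ≤ β * ‖θ1 - θ2‖ + η)
    (θ v : E) :
    h (θ + v) ≤ h θ + ⟪g θ, v⟫ + β / 2 * ‖v‖ ^ 2 + η * ‖v‖ := by
  set φ : ℝ → ℝ := fun t =>
    h (θ + t • v) - t * ⟪g θ, v⟫ - β / 2 * ‖v‖ ^ 2 * t ^ 2 - η * ‖v‖ * t with hφ
  have hder : ∀ t : ℝ, HasDerivAt φ
      (⟪g (θ + t • v), v⟫ - ⟪g θ, v⟫ - β / 2 * ‖v‖ ^ 2 * (2 * t) - η * ‖v‖) t := by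
    intro t
    have hline : HasDerivAt (fun t : ℝ => θ + t • v) v t := by
      simpa using ((hasDerivAt_id t).smul_const v).const_add θ
    have h1 : HasDerivAt (fun t : ℝ => h (θ + t • v)) ⟪g (θ + t • v), v⟫ t := by
      have := (hgrad (θ + t • v)).hasFDerivAt.comp_hasDerivAt t hline
      simpa [Function.comp_def] using this
    have h2 : HasDerivAt (fun t : ℝ => t * ⟪g θ, v⟫) ⟪g θ, v⟫ t := by
      simpa using (hasDerivAt_id t).mul_const (⟪g θ, v⟫)
    have h3 : HasDerivAt (fun t : ℝ => β / 2 * ‖v‖ ^ 2 * t ^ 2)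
        (β / 2 * ‖v‖ ^ 2 * (2 * t)) t := by
      simpa [pow_one] using (hasDerivAt_pow 2 t).const_mul (β / 2 * ‖v‖ ^ 2)
    have h4 : HasDerivAt (fun t : ℝ => η * ‖v‖ * t) (η * ‖v‖) t := by
      simpa using (hasDerivAt_id t).const_mul (η * ‖v‖)
    exact ((h1.sub h2).sub h3).sub h4
  have hanti : AntitoneOn φ (Set.Icc (0:ℝ) 1) := by
    apply antitoneOn_of_deriv_nonpos (convex_Icc 0 1)
    · exact fun t _ => (hder t).continuousAt.continuousWithinAt
    · exact fun t _ => (hder t).differentiableAt.differentiableWithinAt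
    · intro t ht
      rw [interior_Icc] at ht
      rw [(hder t).deriv]
      have hineq : ⟪g (θ + t • v) - g θ, v⟫ ≤ (β * (t * ‖v‖) + η) * ‖v‖ := by
        calc ⟪g (θ + t • v) - g θ, v⟫ ≤ ‖g (θ + t • v) - g θ‖ * ‖v‖ :=
              real_inner_le_norm _ _
          _ ≤ (β * (t * ‖v‖) + η) * ‖v‖ := by
              apply mul_le_mul_of_nonneg_right _ (norm_nonneg v)
              have := happrox (θ + t • v) θ
              simpa [norm_smul, abs_of_pos ht.1] using this
      have : ⟪g (θ + t • v), v⟫ - ⟪g θ, v⟫ ≤ (β * (t * ‖v‖) + η) * ‖v‖ := by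
        rw [← inner_sub_left]; exact hineq
      nlinarith [norm_nonneg v, sq_nonneg (‖v‖), ht.1.le]
  have := hanti (Set.left_mem_Icc.mpr zero_le_one) (Set.right_mem_Icc.mpr zero_le_one)
    zero_le_one
  simp only [hφ] at this
  simp only [zero_smul, add_zero, one_smul, zero_mul, mul_zero, mul_one, one_pow,
    sub_zero, zero_pow] at this
  linarith

theorem approx_polyak_at_minimizer
    {E : Type*} [NormedAddCommGroup E] [InnerProductSpace ℝ E] [CompleteSpace E]
    (h : E → ℝ) (g : E → E) (β η : ℝ) (hβ : 0 < β) (hη : 0 < η)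
    (hgrad : ∀ θ : E, HasGradientAt h (g θ) θ)
    (happrox : ∀ θ1 θ2 : E, ‖g θ1 - g θ2‖ ≤ β * ‖θ1 - θ2‖ + η)
    (θstar : E) (hmin : ∀ θ : E, h θstar ≤ h θ) :
    ∀ θ : E, h θstar - h θ ≤ -(1 / (2 * β)) * (max (‖g θ‖ - η) 0) ^ 2 := by
  intro θ
  rcases le_or_gt ‖g θ‖ η with hle | hgt
  · rw [max_eq_right (by linarith)]
    have := hmin θ
    simp
    linarith
  · rw [max_eq_left (by linarith)]
    have hg0 : (0:ℝ) < ‖g θ‖ := lt_trans hη hgt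
    set t : ℝ := (‖g θ‖ - η) / β with ht
    have htpos : 0 < t := div_pos (by linarith) hβ
    set v : E := -((t / ‖g θ‖) • g θ) with hv
    have hnv : ‖v‖ = t := by
      rw [hv, norm_neg, norm_smul, Real.norm_eq_abs,
        abs_of_pos (div_pos htpos hg0), div_mul_cancel₀ _ (ne_of_gt hg0)]
    have hinner : ⟪g θ, v⟫ = -(t * ‖g θ‖) := by
      rw [hv, inner_neg_right, real_inner_smul_right, real_inner_self_eq_norm_sq]
      field_simp
    have hdesc := approx_descent h g β η hβ hη hgrad happrox θ v
    have hms := hmin (θ + v)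
    rw [hnv, hinner] at hdesc
    have key : -(t * ‖g θ‖) + β / 2 * t ^ 2 + η * t
        = -(1 / (2 * β)) * (‖g θ‖ - η) ^ 2 := by
      rw [ht]; field_simp; ring
    linarith
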